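/- arXiv:2409.13482 — 2 statements merged into one kernel-verified Lean document; each statement's English description precedes it below -/
import Mathlib

section
/- Convergence via the local approximation property. Let X be a real Hilbert space, F : X → X a map, and x† ∈ X. For each L ∈ [0, 1) let φ_L : X → X be a bijection whose inverse is Lipschitz with constant at most 1/(1 − L). Assume there exist a constant C > 0 and an index function ψ (a continuous, strictly increasing function ψ : [0,∞) → [0,∞) with ψ(0) = 0) such that ‖F(x†) − φ_L(x†)‖ ≤ C (1 − L) ψ(1 − L) for all L sufficiently close to 1 (the local approximation property). Let L : (0,∞) → [0,1) be a parameter choice rule with L(δ) → 1 and δ/(1 − L(δ)) → 0 as δ → 0, and for each δ > 0 let z^δ ∈ X satisfy ‖z^δ − F(x†)‖ ≤ δ. Then ‖φ_{L(δ)}^{-1}(z^δ) − x†‖ → 0 as δ → 0. -/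
open Filter

/-- Convergence via the local approximation property. If the family of
bijections `Φ L` (with inverses `Φinv L` Lipschitz with constant `1/(1 − L)`)
satisfies `‖F x† − Φ L x†‖ ≤ C (1 − L) ψ(1 − L)` for an index function `ψ` and all
`L` sufficiently close to `1`, and the parameter choice `L(δ)` satisfies
`L(δ) → 1` and `δ/(1 − L(δ)) → 0` as `δ → 0`, then `‖Φinv (L δ) z^δ − x†‖ → 0`. -/
theorem stmt_8 {X : Type*} [NormedAddCommGroup X] [InnerProductSpace ℝ X] [CompleteSpace X]
    (F : X → X) (xdag : X)
    (Φ Φinv : ℝ → X → X)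
    (hbij : ∀ L ∈ Set.Ico (0 : ℝ) 1,
      Function.LeftInverse (Φinv L) (Φ L) ∧ Function.RightInverse (Φinv L) (Φ L))
    (hlip : ∀ L ∈ Set.Ico (0 : ℝ) 1, ∀ z₁ z₂ : X,
      ‖Φinv L z₁ - Φinv L z₂‖ ≤ (1 / (1 - L)) * ‖z₁ - z₂‖)
    (C : ℝ) (hC : 0 < C)
    (ψ : ℝ → ℝ) (hψ_cont : ContinuousOn ψ (Set.Ici 0))
    (hψ_mono : StrictMonoOn ψ (Set.Ici 0)) (hψ0 : ψ 0 = 0)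
    (happrox : ∀ᶠ L in nhdsWithin (1 : ℝ) (Set.Iio 1),
      ‖F xdag - Φ L xdag‖ ≤ C * ((1 - L) * ψ (1 - L)))
    (Lr : ℝ → ℝ) (hLr_mem : ∀ δ > (0 : ℝ), Lr δ ∈ Set.Ico (0 : ℝ) 1)
    (hLr_lim : Tendsto Lr (nhdsWithin (0 : ℝ) (Set.Ioi 0)) (nhds 1))
    (hquot : Tendsto (fun δ => δ / (1 - Lr δ)) (nhdsWithin (0 : ℝ) (Set.Ioi 0)) (nhds 0))
    (z : ℝ → X) (hz : ∀ δ > (0 : ℝ), ‖z δ - F xdag‖ ≤ δ) :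
    Tendsto (fun δ => ‖Φinv (Lr δ) (z δ) - xdag‖)
      (nhdsWithin (0 : ℝ) (Set.Ioi 0)) (nhds 0) := by
  -- Lr tends to 1 within Iio 1
  have hmemLr : ∀ᶠ δ in nhdsWithin (0 : ℝ) (Set.Ioi 0), Lr δ ∈ Set.Ico (0:ℝ) 1 :=
    eventually_nhdsWithin_of_forall (fun δ hδ => hLr_mem δ hδ)
  have hLr_lim' : Tendsto Lr (nhdsWithin (0 : ℝ) (Set.Ioi 0)) (nhdsWithin (1:ℝ) (Set.Iio 1)) := by
    refine tendsto_nhdsWithin_of_tendsto_nhds_of_eventually_within _ hLr_lim ?_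
    exact hmemLr.mono (fun δ h => h.2)
  have happx : ∀ᶠ δ in nhdsWithin (0 : ℝ) (Set.Ioi 0),
      ‖F xdag - Φ (Lr δ) xdag‖ ≤ C * ((1 - Lr δ) * ψ (1 - Lr δ)) := hLr_lim' happrox
  -- 1 - Lr δ tends to 0 within Ici 0
  have hsub : Tendsto (fun δ => 1 - Lr δ) (nhdsWithin (0 : ℝ) (Set.Ioi 0))
      (nhdsWithin (0:ℝ) (Set.Ici 0)) := by
    refine tendsto_nhdsWithin_of_tendsto_nhds_of_eventually_within _ ?_ ?_
    · have := hLr_lim.const_sub 1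
      simpa using this
    · exact hmemLr.mono (fun δ h => by simp [Set.mem_Ici]; linarith [h.2])
  have hψlim : Tendsto (fun δ => ψ (1 - Lr δ)) (nhdsWithin (0 : ℝ) (Set.Ioi 0)) (nhds 0) := by
    have hc : Tendsto ψ (nhdsWithin (0:ℝ) (Set.Ici 0)) (nhds 0) := by
      have := (hψ_cont 0 (Set.self_mem_Ici)).tendsto
      rwa [hψ0] at this
    exact hc.comp hsub
  -- the bounding function tends to 0
  have hg : Tendsto (fun δ => δ / (1 - Lr δ) + C * ψ (1 - Lr δ))
      (nhdsWithin (0 : ℝ) (Set.Ioi 0)) (nhds 0) := by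
    have := hquot.add ((hψlim.const_mul C))
    simpa using this
  refine squeeze_zero' (Eventually.of_forall fun δ => norm_nonneg _) ?_ hg
  filter_upwards [happx, self_mem_nhdsWithin] with δ ha hδ
  have hδ' : (0:ℝ) < δ := hδ
  have hmem := hLr_mem δ hδ'
  have h1L : (0:ℝ) < 1 - Lr δ := by linarith [hmem.2]
  have hfix : Φinv (Lr δ) (Φ (Lr δ) xdag) = xdag := (hbij (Lr δ) hmem).1 xdag
  calc ‖Φinv (Lr δ) (z δ) - xdag‖
      = ‖Φinv (Lr δ) (z δ) - Φinv (Lr δ) (Φ (Lr δ) xdag)‖ := by rw [hfix]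
    _ ≤ (1 / (1 - Lr δ)) * ‖z δ - Φ (Lr δ) xdag‖ := hlip (Lr δ) hmem _ _
    _ ≤ (1 / (1 - Lr δ)) * (δ + C * ((1 - Lr δ) * ψ (1 - Lr δ))) := by
        refine mul_le_mul_of_nonneg_left ?_ (by positivity)
        calc ‖z δ - Φ (Lr δ) xdag‖ ≤ ‖z δ - F xdag‖ + ‖F xdag - Φ (Lr δ) xdag‖ :=
              norm_sub_le_norm_sub_add_norm_sub _ _ _
          _ ≤ δ + C * ((1 - Lr δ) * ψ (1 - Lr δ)) := add_le_add (hz δ hδ') ha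
    _ = δ / (1 - Lr δ) + C * ψ (1 - Lr δ) := by field_simp
end

section
/- Convergence via the inversion error. Let X be a real Hilbert space, F : X → X a map, and x† ∈ X. For each L ∈ [0, 1) let φ_L : X → X be a bijection whose inverse is Lipschitz with constant at most 1/(1 − L). Assume the inversion error satisfies ‖φ_L^{-1}(F(x†)) − x†‖ → 0 as L → 1. Let L : (0,∞) → [0,1) be a parameter choice rule with L(δ) → 1 and δ/(1 − L(δ)) → 0 as δ → 0, and for each δ > 0 let z^δ ∈ X satisfy ‖z^δ − F(x†)‖ ≤ δ. Then ‖φ_{L(δ)}^{-1}(z^δ) − x†‖ → 0 as δ → 0. -/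
open Filter

/-- Convergence via the inversion error. If the inversion error
`‖Φinv L (F x†) − x†‖` tends to `0` as `L → 1` and the parameter choice `L(δ)`
satisfies `L(δ) → 1` and `δ/(1 − L(δ)) → 0` as `δ → 0`, then
`‖Φinv (L δ) z^δ − x†‖ → 0` as `δ → 0`. -/
theorem stmt_9 {X : Type*} [NormedAddCommGroup X] [InnerProductSpace ℝ X] [CompleteSpace X]
    (F : X → X) (xdag : X)
    (Φ Φinv : ℝ → X → X)
    (hbij : ∀ L ∈ Set.Ico (0 : ℝ) 1,
      Function.LeftInverse (Φinv L) (Φ L) ∧ Function.RightInverse (Φinv L) (Φ L))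
    (hlip : ∀ L ∈ Set.Ico (0 : ℝ) 1, ∀ z₁ z₂ : X,
      ‖Φinv L z₁ - Φinv L z₂‖ ≤ (1 / (1 - L)) * ‖z₁ - z₂‖)
    (hinv_err : Tendsto (fun L => ‖Φinv L (F xdag) - xdag‖)
      (nhdsWithin (1 : ℝ) (Set.Iio 1)) (nhds 0))
    (Lr : ℝ → ℝ) (hLr_mem : ∀ δ > (0 : ℝ), Lr δ ∈ Set.Ico (0 : ℝ) 1)
    (hLr_lim : Tendsto Lr (nhdsWithin (0 : ℝ) (Set.Ioi 0)) (nhds 1))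
    (hquot : Tendsto (fun δ => δ / (1 - Lr δ)) (nhdsWithin (0 : ℝ) (Set.Ioi 0)) (nhds 0))
    (z : ℝ → X) (hz : ∀ δ > (0 : ℝ), ‖z δ - F xdag‖ ≤ δ) :
    Tendsto (fun δ => ‖Φinv (Lr δ) (z δ) - xdag‖)
      (nhdsWithin (0 : ℝ) (Set.Ioi 0)) (nhds 0) := by

  have hsub : Tendsto Lr (nhdsWithin (0 : ℝ) (Set.Ioi 0))
      (nhdsWithin (1 : ℝ) (Set.Iio 1)) := by
    refine tendsto_nhdsWithin_of_tendsto_nhds_of_eventually_within _ hLr_lim ?_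
    filter_upwards [self_mem_nhdsWithin] with δ hδ
    exact (hLr_mem δ hδ).2
  have herr : Tendsto (fun δ => ‖Φinv (Lr δ) (F xdag) - xdag‖)
      (nhdsWithin (0 : ℝ) (Set.Ioi 0)) (nhds 0) := hinv_err.comp hsub
  have hsum : Tendsto (fun δ => δ / (1 - Lr δ) + ‖Φinv (Lr δ) (F xdag) - xdag‖)
      (nhdsWithin (0 : ℝ) (Set.Ioi 0)) (nhds 0) := by
    simpa using hquot.add herr
  refine squeeze_zero' (Eventually.of_forall fun δ => norm_nonneg _) ?_ hsum
  filter_upwards [self_mem_nhdsWithin] with δ hδ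
  · have hmem := hLr_mem δ hδ
    have h1 : ‖Φinv (Lr δ) (z δ) - xdag‖ ≤
        ‖Φinv (Lr δ) (z δ) - Φinv (Lr δ) (F xdag)‖ + ‖Φinv (Lr δ) (F xdag) - xdag‖ :=
      norm_sub_le_norm_sub_add_norm_sub _ _ _
    have h2 : ‖Φinv (Lr δ) (z δ) - Φinv (Lr δ) (F xdag)‖ ≤
        (1 / (1 - Lr δ)) * ‖z δ - F xdag‖ := hlip _ hmem _ _
    have hpos : (0:ℝ) < 1 - Lr δ := by linarith [hmem.2]
    have h3 : (1 / (1 - Lr δ)) * ‖z δ - F xdag‖ ≤ δ / (1 - Lr δ) := by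
      rw [div_eq_mul_one_div δ, mul_comm δ]
      exact mul_le_mul_of_nonneg_left (hz δ hδ) (by positivity)
    linarith
end
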